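/- arXiv:math/0402154 — 2 statements merged into one kernel-verified Lean document; each statement's English description precedes it below -/
import Mathlib

section
/- Let G be a connected linear algebraic group over an algebraically closed field of characteristic zero with trivial character group, acting linearly on a finite-dimensional vector space V. Then the ring of invariants k[V]^G is an integrally closed (normal) domain, and it is a unique factorization domain. -/
/-!
STATEMENT 1: Let `G` be a connected linear algebraic group over an algebraically closed field
`k` of characteristic zero with trivial character group, acting linearly on a finite-dimensional
vector space `V`.  Then the invariant ring `k[V]^G` is an integrally closed (normal) domain and
a unique factorization domain.

We model `G` as a subgroup of `GL(n, k)` (acting linearly on `V = k^n`) which is Zariski closed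
in `GL(n, k)`, connected for the Zariski topology, and such that every regular character
`G → k^*` (i.e. a group homomorphism given by a polynomial in the matrix entries and the inverse
of the determinant) is trivial.
-/

open MvPolynomial

noncomputable section

/-- The Zariski topology on the space of `n × n` matrices over `k`. -/
def matrixZariski (n : ℕ) (k : Type) [Field k] :
    TopologicalSpace (Matrix (Fin n) (Fin n) k) :=
  TopologicalSpace.generateFrom
    {s | ∃ p : MvPolynomial (Fin n × Fin n) k,
      s = {A | MvPolynomial.eval (fun ij => A ij.1 ij.2) p ≠ 0}}

/-- The image of a subgroup of `GL(n, k)` in the space of matrices. -/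
def matrixCarrier {n : ℕ} {k : Type} [Field k]
    (G : Subgroup (Matrix.GeneralLinearGroup (Fin n) k)) : Set (Matrix (Fin n) (Fin n) k) :=
  (fun g : Matrix.GeneralLinearGroup (Fin n) k => (g : Matrix (Fin n) (Fin n) k)) '' (G : Set _)

/-- The subalgebra of `G`-invariant polynomial functions on `V = k^n`. -/
def invariantAlgebra {n : ℕ} {k : Type} [Field k]
    (G : Subgroup (Matrix.GeneralLinearGroup (Fin n) k)) :
    Subalgebra k (MvPolynomial (Fin n) k) where
  carrier := {f | ∀ g ∈ G, MvPolynomial.aeval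
      (fun i => ∑ j, ((g : Matrix (Fin n) (Fin n) k) i j) • (X j : MvPolynomial (Fin n) k)) f
    = f}
  add_mem' := fun hf hg => by intro g hgG; rw [map_add, hf g hgG, hg g hgG]
  mul_mem' := fun hf hg => by intro g hgG; rw [map_mul, hf g hgG, hg g hgG]
  algebraMap_mem' := fun c => by intro g hgG; simp


namespace InvariantsAux

variable {k : Type} [Field k] {n : ℕ}

/-- The action of a matrix on polynomials by linear substitution. -/
noncomputable def act (A : Matrix (Fin n) (Fin n) k) :
    MvPolynomial (Fin n) k →ₐ[k] MvPolynomial (Fin n) k :=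
  aeval (fun i => ∑ j, A i j • (X j : MvPolynomial (Fin n) k))

lemma act_X (A : Matrix (Fin n) (Fin n) k) (i : Fin n) :
    act A (X i) = ∑ j, A i j • (X j : MvPolynomial (Fin n) k) := aeval_X _ _

lemma act_one : (act (1 : Matrix (Fin n) (Fin n) k)) = AlgHom.id k _ := by
  apply algHom_ext
  intro i
  simp [act_X, Matrix.one_apply, Finset.sum_ite_eq]

lemma act_act (A B : Matrix (Fin n) (Fin n) k) (p : MvPolynomial (Fin n) k) :
    act B (act A p) = act (A * B) p := by
  have : (act B).comp (act A) = act (A * B) := by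
    apply algHom_ext
    intro i
    simp only [AlgHom.comp_apply, act_X, map_sum]
    simp only [Algebra.smul_def, map_mul, AlgHom.commutes, act_X, Matrix.mul_apply, map_sum,
      Finset.mul_sum, Finset.sum_mul]
    rw [Finset.sum_comm]
    simp [mul_assoc]
  exact DFunLike.congr_fun this p

lemma act_one_apply (p : MvPolynomial (Fin n) k) : act (1 : Matrix (Fin n) (Fin n) k) p = p := by
  rw [act_one]; rfl

lemma act_act_inv (A : Matrix (Fin n) (Fin n) k) (hA : IsUnit A) (p : MvPolynomial (Fin n) k) :
    act A⁻¹ (act A p) = p := by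
  rw [act_act, Matrix.mul_nonsing_inv _ ((Matrix.isUnit_iff_isUnit_det A).mp hA), act_one_apply]

lemma act_injective (A : Matrix (Fin n) (Fin n) k) (hA : IsUnit A) :
    Function.Injective (act A : MvPolynomial (Fin n) k →ₐ[k] _) := by
  intro p q h
  have := congrArg (act A⁻¹) h
  rwa [act_act_inv A hA, act_act_inv A hA] at this

lemma act_ne_zero (A : Matrix (Fin n) (Fin n) k) (hA : IsUnit A) {p : MvPolynomial (Fin n) k}
    (hp : p ≠ 0) : act A p ≠ 0 := by
  intro h
  exact hp (act_injective A hA (by rw [h, map_zero]))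

lemma act_prime (A : Matrix (Fin n) (Fin n) k) (hA : IsUnit A) {p : MvPolynomial (Fin n) k}
    (hp : Prime p) : Prime (act A p) := by
  exact (MulEquiv.prime_iff (p := p) (M := MvPolynomial (Fin n) k) (N := MvPolynomial (Fin n) k)
    (E := MvPolynomial (Fin n) k ≃* MvPolynomial (Fin n) k)
    { toFun := ⇑(act A)
      invFun := ⇑(act A⁻¹)
      left_inv := act_act_inv A hA
      right_inv := fun q => by
        rw [act_act, Matrix.nonsing_inv_mul _ ((Matrix.isUnit_iff_isUnit_det A).mp hA),
          act_one_apply]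
      map_mul' := map_mul _ }).mpr hp

lemma aeval_eq_eval (f : (Fin n × Fin n) → k) (p : MvPolynomial (Fin n × Fin n) k) :
    aeval f p = eval f p := rfl

/-- The "generic" action: coefficients are polynomials in the matrix entries. -/
noncomputable def genAct (p : MvPolynomial (Fin n) k) :
    MvPolynomial (Fin n) (MvPolynomial (Fin n × Fin n) k) :=
  aeval (R := k) (fun i => ∑ j, (C (X (i, j)) :
    MvPolynomial (Fin n) (MvPolynomial (Fin n × Fin n) k)) * X j) p

lemma map_genAct (A : Matrix (Fin n) (Fin n) k) (p : MvPolynomial (Fin n) k) :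
    map (eval (fun ij => A ij.1 ij.2)) (genAct p) = act A p := by
  set e : MvPolynomial (Fin n × Fin n) k →ₐ[k] k := aeval (fun ij => A ij.1 ij.2) with he
  have h1 : (mapAlgHom (σ := Fin n) e).comp (aeval (R := k) (fun i => ∑ j, (C (X (i, j)) :
      MvPolynomial (Fin n) (MvPolynomial (Fin n × Fin n) k)) * X j)) = act A := by
    apply algHom_ext
    intro i
    simp [mapAlgHom_apply, act_X, Algebra.smul_def, he, algebraMap_eq]
  have hce : (e : MvPolynomial (Fin n × Fin n) k →+* k) = eval (fun ij => A ij.1 ij.2) := rfl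
  have := DFunLike.congr_fun h1 p
  simpa [mapAlgHom_apply, genAct, hce, he] using this

lemma coeff_act (A : Matrix (Fin n) (Fin n) k) (p : MvPolynomial (Fin n) k) (mu : Fin n →₀ ℕ) :
    coeff mu (act A p) = eval (fun ij => A ij.1 ij.2) (coeff mu (genAct p)) := by
  rw [← map_genAct, coeff_map]

lemma mv_isUnit_eq_C : ∀ {m : ℕ} {u : MvPolynomial (Fin m) k},
    IsUnit u → ∃ c : k, c ≠ 0 ∧ u = C c := by
  intro m
  induction m with
  | zero =>
    intro u hu
    obtain ⟨c, rfl⟩ := C_surjective (Fin 0) u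
    refine ⟨c, ?_, rfl⟩
    rintro rfl
    rw [map_zero] at hu
    exact hu.ne_zero rfl
  | succ m ih =>
    intro u hu
    have h2 : IsUnit (finSuccEquiv k m u) := hu.map _
    obtain ⟨r, hr, hru⟩ := Polynomial.isUnit_iff.mp h2
    obtain ⟨c, hc, rfl⟩ := ih hr
    refine ⟨c, hc, ?_⟩
    have := congrArg (finSuccEquiv k m).symm hru
    rw [AlgEquiv.symm_apply_apply] at this
    rw [← this]
    have h3 := congrArg (fun φ : k →+* MvPolynomial (Fin (m+1)) k => φ c)
      (finSuccEquiv_comp_C_eq_C (R := k) m)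
    simpa using h3

lemma associated_scalar {x q : MvPolynomial (Fin n) k} (h : Associated x q) :
    ∃ c : k, c ≠ 0 ∧ q = C c * x := by
  obtain ⟨u, hu⟩ := h
  obtain ⟨c, hc, hcu⟩ := mv_isUnit_eq_C u.isUnit
  exact ⟨c, hc, by rw [← hu, hcu, mul_comm]⟩

lemma associated_of_scalar {x q : MvPolynomial (Fin n) k} {c : k} (hc : c ≠ 0)
    (h : q = C c * x) : Associated x q := by
  refine ⟨⟨C c, C c⁻¹, ?_, ?_⟩, by rw [h, mul_comm]⟩ <;>
    · rw [← C_mul]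
      first
        | rw [mul_inv_cancel₀ hc, C_1]
        | rw [inv_mul_cancel₀ hc, C_1]

lemma isClosed_eval_zero (q : MvPolynomial (Fin n × Fin n) k) :
    @IsClosed _ (matrixZariski n k) {A | eval (fun ij => A ij.1 ij.2) q = 0} := by
  letI := matrixZariski n k
  rw [← isOpen_compl_iff]
  have : {A : Matrix (Fin n) (Fin n) k | eval (fun ij => A ij.1 ij.2) q = 0}ᶜ
      = {A | eval (fun ij => A ij.1 ij.2) q ≠ 0} := rfl
  rw [this]
  exact TopologicalSpace.isOpen_generateFrom_of_mem ⟨q, rfl⟩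

/-- The (closed) set of matrices `A` such that `act A p` is coefficientwise
proportional to `q`. -/
def propSet (p q : MvPolynomial (Fin n) k) : Set (Matrix (Fin n) (Fin n) k) :=
  {A | ∀ mu nu : Fin n →₀ ℕ,
    coeff nu q * coeff mu (act A p) = coeff mu q * coeff nu (act A p)}

lemma isClosed_propSet (p q : MvPolynomial (Fin n) k) :
    @IsClosed _ (matrixZariski n k) (propSet p q) := by
  letI := matrixZariski n k
  have : propSet p q = ⋂ mu : Fin n →₀ ℕ, ⋂ nu : Fin n →₀ ℕ,
      {A | eval (fun ij => A ij.1 ij.2)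
        (C (coeff nu q) * coeff mu (genAct p) - C (coeff mu q) * coeff nu (genAct p)) = 0} := by
    ext A
    simp only [propSet, Set.mem_setOf_eq, Set.mem_iInter, map_sub, map_mul, eval_C,
      sub_eq_zero, ← coeff_act]
  rw [this]
  exact isClosed_iInter fun mu => isClosed_iInter fun nu => isClosed_eval_zero _

lemma mem_propSet_of_scalar {p q : MvPolynomial (Fin n) k} {A : Matrix (Fin n) (Fin n) k}
    {c : k} (h : act A p = C c * q) : A ∈ propSet p q := by
  intro mu nu
  rw [h, coeff_C_mul, coeff_C_mul]
  ring

lemma propSet_scalar {p q : MvPolynomial (Fin n) k} {A : Matrix (Fin n) (Fin n) k}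
    (hA : A ∈ propSet p q) (hx : act A p ≠ 0) : ∃ d : k, q = C d * act A p := by
  obtain ⟨mu, hmu⟩ := MvPolynomial.ne_zero_iff.mp hx
  refine ⟨coeff mu q / coeff mu (act A p), ?_⟩
  apply MvPolynomial.ext
  intro nu
  rw [coeff_C_mul]
  have := hA mu nu
  field_simp
  linear_combination this

lemma scalar_cancel {x q : MvPolynomial (Fin n) k} {c : k} (hc : c ≠ 0) (h : q = C c * x) :
    x = C c⁻¹ * q := by
  rw [h, ← mul_assoc, ← C_mul, inv_mul_cancel₀ hc, C_1, one_mul]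

lemma mem_invariantAlgebra {G : Subgroup (Matrix.GeneralLinearGroup (Fin n) k)}
    {f : MvPolynomial (Fin n) k} :
    f ∈ invariantAlgebra G ↔ ∀ g : Matrix.GeneralLinearGroup (Fin n) k, g ∈ G →
      act ((g : Matrix (Fin n) (Fin n) k)) f = f := Iff.rfl

lemma factor_mem (G : Subgroup (Matrix.GeneralLinearGroup (Fin n) k))
    (hconn : @IsPreconnected _ (matrixZariski n k) (matrixCarrier G))
    (hchar : ∀ χ : G →* kˣ,
      (∃ (p : MvPolynomial (Fin n × Fin n) k) (m : ℕ), ∀ g : G,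
        (χ g : k) * ((g : Matrix.GeneralLinearGroup (Fin n) k) : Matrix (Fin n) (Fin n) k).det ^ m
          = MvPolynomial.eval
            (fun ij => ((g : Matrix.GeneralLinearGroup (Fin n) k) :
              Matrix (Fin n) (Fin n) k) ij.1 ij.2) p) →
      χ = 1)
    {f : MvPolynomial (Fin n) k} (hfR : f ∈ invariantAlgebra G)
    (m : Multiset (MvPolynomial (Fin n) k)) (hm : ∀ b ∈ m, Prime b)
    (hprod : Associated m.prod f)
    {p : MvPolynomial (Fin n) k} (hpm : p ∈ m) :
    p ∈ invariantAlgebra G := by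
  classical
  have hp : Prime p := hm p hpm
  have hp0 : p ≠ 0 := hp.ne_zero
  set Cset := propSet p p with hCset
  set T : Finset (MvPolynomial (Fin n) k) :=
    m.toFinset.filter (fun b => ¬ Associated b p) with hT
  set Dset := ⋃ b ∈ (T : Set (MvPolynomial (Fin n) k)), propSet p b with hDset
  have hunit : ∀ A ∈ matrixCarrier G, IsUnit A := by
    rintro A ⟨g, hg, rfl⟩; exact ⟨g, rfl⟩
  have hinv : ∀ A ∈ matrixCarrier G, act A f = f := by
    rintro A ⟨g, hg, rfl⟩; exact hfR g hg
  have key : ∀ A ∈ matrixCarrier G, ∃ b ∈ m, Associated (act A p) b := by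
    intro A hA
    have hxprime := act_prime A (hunit A hA) hp
    have hxf : act A p ∣ f := by
      have h2 : p ∣ f := (Multiset.dvd_prod hpm).trans hprod.dvd
      obtain ⟨t, ht⟩ := h2
      exact ⟨act A t, by rw [← hinv A hA, ht, map_mul]⟩
    have hxm : act A p ∣ m.prod := hxf.trans hprod.symm.dvd
    obtain ⟨b, hbm, hxb⟩ := hxprime.exists_mem_multiset_dvd hxm
    refine ⟨b, hbm, ?_⟩
    obtain ⟨t, ht⟩ := hxb
    rcases ((hm b hbm).irreducible.isUnit_or_isUnit ht) with h | h
    · exact absurd h hxprime.not_unit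
    · exact ⟨h.unit, by rw [IsUnit.unit_spec, ← ht]⟩
  have hcover : ∀ A ∈ matrixCarrier G, A ∈ Cset ∪ Dset := by
    intro A hA
    obtain ⟨b, hbm, hab⟩ := key A hA
    by_cases hb : Associated b p
    · left
      obtain ⟨c, hc, hcb⟩ := associated_scalar (hab.trans hb)
      exact mem_propSet_of_scalar (scalar_cancel hc hcb)
    · right
      obtain ⟨c, hc, hcb⟩ := associated_scalar hab
      have hmem : A ∈ propSet p b := mem_propSet_of_scalar (scalar_cancel hc hcb)
      have hbT : b ∈ T := by
        rw [hT, Finset.mem_filter, Multiset.mem_toFinset]; exact ⟨hbm, hb⟩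
      exact Set.mem_biUnion hbT hmem
  have hdisj : ∀ A ∈ matrixCarrier G, A ∈ Cset → A ∈ Dset → False := by
    intro A hA hC hD
    have hx0 : act A p ≠ 0 := act_ne_zero A (hunit A hA) hp0
    obtain ⟨b, hbT, hb⟩ := Set.mem_iUnion₂.mp hD
    have hbT' := Finset.mem_filter.mp hbT
    have hbm : b ∈ m := Multiset.mem_toFinset.mp hbT'.1
    obtain ⟨d, hd⟩ := propSet_scalar hC hx0
    obtain ⟨d', hd'⟩ := propSet_scalar hb hx0
    have hd0 : d ≠ 0 := by rintro rfl; rw [C_0, zero_mul] at hd; exact hp0 hd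
    have hd'0 : d' ≠ 0 := by rintro rfl; rw [C_0, zero_mul] at hd'; exact (hm b hbm).ne_zero hd'
    have hbp : b = C (d' * d⁻¹) * p := by
      rw [hd', scalar_cancel hd0 hd, ← mul_assoc, ← C_mul]
    exact hbT'.2 ((associated_of_scalar (mul_ne_zero hd'0 (inv_ne_zero hd0)) hbp).symm)
  letI := matrixZariski n k
  have hCc : IsClosed Cset := isClosed_propSet p p
  have hDc : IsClosed Dset :=
    Set.Finite.isClosed_biUnion (T.finite_toSet) (fun b _ => isClosed_propSet p b)
  have h1mem : (1 : Matrix (Fin n) (Fin n) k) ∈ matrixCarrier G := ⟨1, G.one_mem, Units.val_one⟩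
  have h1C : (1 : Matrix (Fin n) (Fin n) k) ∈ Cset :=
    mem_propSet_of_scalar (c := 1) (by rw [act_one_apply, C_1, one_mul])
  have hsub : matrixCarrier G ⊆ Cset := by
    by_contra hne
    rw [Set.not_subset] at hne
    obtain ⟨A0, hA0s, hA0C⟩ := hne
    have happ := hconn Dsetᶜ Csetᶜ hDc.isOpen_compl hCc.isOpen_compl
      (fun A hA => by
        by_cases h : A ∈ Cset
        · exact Or.inl (fun hD => hdisj A hA h hD)
        · exact Or.inr h)
      ⟨1, h1mem, fun hD => hdisj 1 h1mem h1C hD⟩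
      ⟨A0, hA0s, hA0C⟩
    obtain ⟨A1, hA1s, hA1d, hA1c⟩ := happ
    rcases hcover A1 hA1s with h | h
    · exact hA1c h
    · exact hA1d h
  have hsemi : ∀ g : Matrix.GeneralLinearGroup (Fin n) k, g ∈ G →
      ∃ c : k, c ≠ 0 ∧ act ((g : Matrix (Fin n) (Fin n) k)) p = C c * p := by
    intro g hg
    have hA : ((g : Matrix (Fin n) (Fin n) k)) ∈ Cset := hsub ⟨g, hg, rfl⟩
    have hx0 : act ((g : Matrix (Fin n) (Fin n) k)) p ≠ 0 :=
      act_ne_zero _ ⟨g, rfl⟩ hp0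
    obtain ⟨d, hd⟩ := propSet_scalar hA hx0
    have hd0 : d ≠ 0 := by rintro rfl; rw [C_0, zero_mul] at hd; exact hp0 hd
    exact ⟨d⁻¹, inv_ne_zero hd0, scalar_cancel hd0 hd⟩
  have hex : ∀ g : G, ∃ c : k, c ≠ 0 ∧
      act (((g : Matrix.GeneralLinearGroup (Fin n) k) : Matrix (Fin n) (Fin n) k)) p
        = C c * p := fun g => hsemi g g.2
  choose sc hsc0 hscp using hex
  have uniq : ∀ c d : k, C c * p = C d * p → c = d := by
    intro c d h
    exact C_injective (Fin n) k (mul_right_cancel₀ hp0 h)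
  have hmul : ∀ g h : G, sc (g * h) = sc g * sc h := by
    intro g h
    apply uniq
    rw [← hscp (g * h)]
    have hcoe : (((g * h : G) : Matrix.GeneralLinearGroup (Fin n) k) :
        Matrix (Fin n) (Fin n) k) =
        ((g : Matrix.GeneralLinearGroup (Fin n) k) : Matrix (Fin n) (Fin n) k) *
        ((h : Matrix.GeneralLinearGroup (Fin n) k) : Matrix (Fin n) (Fin n) k) := rfl
    rw [hcoe, ← act_act, hscp g, map_mul, hscp h]
    have hC : act (((h : Matrix.GeneralLinearGroup (Fin n) k) : Matrix (Fin n) (Fin n) k))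
        (C (sc g)) = C (sc g) := by
      rw [← algebraMap_eq]; exact AlgHom.commutes _ _
    rw [hC, C_mul]
    ring
  set χ : G →* kˣ := MonoidHom.mk' (fun g => Units.mk0 (sc g) (hsc0 g))
    (fun g h => Units.ext (hmul g h)) with hχ
  obtain ⟨mu0, hmu0⟩ := MvPolynomial.ne_zero_iff.mp hp0
  have hreg : ∃ (P : MvPolynomial (Fin n × Fin n) k) (mm : ℕ), ∀ g : G,
      (χ g : k) * ((g : Matrix.GeneralLinearGroup (Fin n) k) :
        Matrix (Fin n) (Fin n) k).det ^ mm
        = MvPolynomial.eval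
          (fun ij => ((g : Matrix.GeneralLinearGroup (Fin n) k) :
            Matrix (Fin n) (Fin n) k) ij.1 ij.2) P := by
    refine ⟨C (coeff mu0 p)⁻¹ * coeff mu0 (genAct p), 0, fun g => ?_⟩
    rw [pow_zero, mul_one, map_mul, eval_C, ← coeff_act, hscp g, coeff_C_mul]
    have : (χ g : k) = sc g := rfl
    rw [this]
    field_simp
  have hone := hchar χ hreg
  intro g hg
  have h1 : χ ⟨g, hg⟩ = 1 := by rw [hone]; rfl
  have h2 : sc ⟨g, hg⟩ = 1 := by
    have := congrArg Units.val h1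
    exact this
  have h3 := hscp ⟨g, hg⟩
  rw [h2, C_1, one_mul] at h3
  exact h3

lemma C_mem (G : Subgroup (Matrix.GeneralLinearGroup (Fin n) k)) (c : k) :
    C c ∈ invariantAlgebra G := by
  have := (invariantAlgebra G).algebraMap_mem c
  rwa [algebraMap_eq] at this

lemma isUnit_C_R (G : Subgroup (Matrix.GeneralLinearGroup (Fin n) k)) {c : k} (hc : c ≠ 0) :
    IsUnit (⟨C c, C_mem G c⟩ : invariantAlgebra G) := by
  refine IsUnit.of_mul_eq_one ⟨C c⁻¹, C_mem G c⁻¹⟩ ?_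
  apply Subtype.ext
  show C c * C c⁻¹ = (1 : MvPolynomial (Fin n) k)
  rw [← C_mul, mul_inv_cancel₀ hc, C_1]

lemma dvd_lift (G : Subgroup (Matrix.GeneralLinearGroup (Fin n) k))
    {p : MvPolynomial (Fin n) k} (hp0 : p ≠ 0)
    (hmem : p ∈ invariantAlgebra G) (a : invariantAlgebra G)
    (h : p ∣ (a : MvPolynomial (Fin n) k)) : (⟨p, hmem⟩ : invariantAlgebra G) ∣ a := by
  obtain ⟨t, ht⟩ := h
  have htmem : t ∈ invariantAlgebra G := by
    intro g hg
    have h1 : act ((g : Matrix (Fin n) (Fin n) k)) (a : MvPolynomial (Fin n) k)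
        = (a : MvPolynomial (Fin n) k) := a.2 g hg
    have h2 : act ((g : Matrix (Fin n) (Fin n) k)) p = p := hmem g hg
    have h3 : p * act ((g : Matrix (Fin n) (Fin n) k)) t = p * t := by
      conv_lhs => rw [← h2]
      rw [← map_mul, ← ht, h1, ht]
    exact mul_left_cancel₀ hp0 h3
  exact ⟨⟨t, htmem⟩, Subtype.ext ht⟩

lemma prime_lift (G : Subgroup (Matrix.GeneralLinearGroup (Fin n) k))
    {p : MvPolynomial (Fin n) k} (hp : Prime p) (hmem : p ∈ invariantAlgebra G) :
    Prime (⟨p, hmem⟩ : invariantAlgebra G) := by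
  refine ⟨fun h0 => hp.ne_zero (congrArg Subtype.val h0),
    fun hu => hp.not_unit (hu.map (invariantAlgebra G).val), ?_⟩
  intro a b hdvd
  obtain ⟨t, ht⟩ := hdvd
  have hdvd' : p ∣ (a : MvPolynomial (Fin n) k) * (b : MvPolynomial (Fin n) k) :=
    ⟨(t : MvPolynomial (Fin n) k), congrArg Subtype.val ht⟩
  rcases hp.2.2 _ _ hdvd' with h | h
  · exact Or.inl (dvd_lift G hp.ne_zero hmem a h)
  · exact Or.inr (dvd_lift G hp.ne_zero hmem b h)

end InvariantsAux

theorem invariants_normal_and_ufd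
    (k : Type) [Field k] [IsAlgClosed k] [CharZero k] (n : ℕ)
    (G : Subgroup (Matrix.GeneralLinearGroup (Fin n) k))
    -- `G` is Zariski closed in `GL(n, k)`:
    (hclosed : ∃ S : Set (MvPolynomial (Fin n × Fin n) k),
      matrixCarrier G = {A | IsUnit A.det ∧
        ∀ p ∈ S, MvPolynomial.eval (fun ij => A ij.1 ij.2) p = 0})
    -- `G` is connected (for the Zariski topology):
    (hconn : @IsPreconnected _ (matrixZariski n k) (matrixCarrier G))
    -- `G` has no nontrivial (regular) characters:
    (hchar : ∀ χ : G →* kˣ,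
      (∃ (p : MvPolynomial (Fin n × Fin n) k) (m : ℕ), ∀ g : G,
        (χ g : k) * ((g : Matrix.GeneralLinearGroup (Fin n) k) : Matrix (Fin n) (Fin n) k).det ^ m
          = MvPolynomial.eval
            (fun ij => ((g : Matrix.GeneralLinearGroup (Fin n) k) :
              Matrix (Fin n) (Fin n) k) ij.1 ij.2) p) →
      χ = 1) :
    -- the invariant ring is a normal (integrally closed) domain and a UFD:
    IsDomain (invariantAlgebra G) ∧ IsIntegrallyClosed (invariantAlgebra G) ∧
      UniqueFactorizationMonoid (invariantAlgebra G) := by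
  classical
  have hufd : UniqueFactorizationMonoid (invariantAlgebra G) := by
    apply UniqueFactorizationMonoid.of_exists_prime_factors
    intro a ha
    rcases Classical.em (IsUnit a) with hu | hu
    · exact ⟨0, by simp, by rw [Multiset.prod_zero]; exact (associated_one_iff_isUnit.mpr hu).symm⟩
    · have hf0 : (a : MvPolynomial (Fin n) k) ≠ 0 := fun h => ha (Subtype.ext h)
      have hfu : ¬ IsUnit (a : MvPolynomial (Fin n) k) := by
        intro h
        obtain ⟨c, hc, hceq⟩ := InvariantsAux.mv_isUnit_eq_C h
        apply hu
        have haeq : a = ⟨C c, InvariantsAux.C_mem G c⟩ := Subtype.ext hceq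
        rw [haeq]
        exact InvariantsAux.isUnit_C_R G hc
      obtain ⟨m, hm, hprod⟩ := UniqueFactorizationMonoid.exists_prime_factors _ hf0
      have hbmem : ∀ b ∈ m, b ∈ invariantAlgebra G :=
        fun b hb => InvariantsAux.factor_mem G hconn hchar a.2 m hm hprod hb
      refine ⟨m.pmap (fun b hb => (⟨b, hb⟩ : invariantAlgebra G)) hbmem, ?_, ?_⟩
      · intro x hx
        rw [Multiset.mem_pmap] at hx
        obtain ⟨b, hb, rfl⟩ := hx
        exact InvariantsAux.prime_lift G (hm b hb) (hbmem b hb)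
      · have h2 : Multiset.map (⇑(invariantAlgebra G).val)
            (m.pmap (fun b hb => (⟨b, hb⟩ : invariantAlgebra G)) hbmem) = m := by
          rw [Multiset.map_pmap]
          calc Multiset.pmap (fun b hb =>
                (invariantAlgebra G).val (⟨b, hb⟩ : invariantAlgebra G)) m hbmem
              = Multiset.pmap (fun b _ => id b) m hbmem := by
                apply Multiset.pmap_congr
                intro b hb h1 h2
                rfl
            _ = m := by rw [Multiset.pmap_eq_map, Multiset.map_id]
        have hcoe : (((m.pmap (fun b hb => (⟨b, hb⟩ : invariantAlgebra G)) hbmem).prod :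
            invariantAlgebra G) : MvPolynomial (Fin n) k) = m.prod := by
          have h3 := map_multiset_prod ((invariantAlgebra G).val)
            (m.pmap (fun b hb => (⟨b, hb⟩ : invariantAlgebra G)) hbmem)
          rw [h2] at h3
          exact h3
        obtain ⟨u, hu1⟩ := hprod
        obtain ⟨c, hc, hcu⟩ := InvariantsAux.mv_isUnit_eq_C u.isUnit
        have hfin : (m.pmap (fun b hb => (⟨b, hb⟩ : invariantAlgebra G)) hbmem).prod *
            ⟨C c, InvariantsAux.C_mem G c⟩ = a := by
          apply Subtype.ext
          show (((m.pmap (fun b hb => (⟨b, hb⟩ : invariantAlgebra G)) hbmem).prod :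
            invariantAlgebra G) : MvPolynomial (Fin n) k) * C c = (a : MvPolynomial (Fin n) k)
          rw [hcoe, ← hcu, hu1]
        exact ⟨(InvariantsAux.isUnit_C_R G hc).unit, by rw [IsUnit.unit_spec]; exact hfin⟩
  refine ⟨inferInstance, ?_, hufd⟩
  exact @UniqueFactorizationMonoid.instIsIntegrallyClosed (invariantAlgebra G) _ _ hufd


end
end

section
/- Let F(w_0, w_1, w_2) be a homogeneous polynomial of degree d over a field k, and substitute w_0 = x_1 y_2 y_3 ⋯ y_r, w_1 = y_1 x_2 y_3 ⋯ y_r, w_2 = y_1 y_2 x_3 y_4 ⋯ y_r into F, obtaining a polynomial G(x_1, x_2, x_3, y_1, …, y_r). Then G is divisible by y_1^m in k[x_1,x_2,x_3,y_1,…,y_r] if and only if F(1, w_1, w_2) lies in the m-th power of the ideal (w_1, w_2) ⊆ k[w_1, w_2]. -/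
/-!
STATEMENT 12: Let `F(w_0, w_1, w_2)` be homogeneous of degree `d` over a field `k`.  Substitute
`w_0 = x_1 y_2 ⋯ y_r`, `w_1 = y_1 x_2 y_3 ⋯ y_r`, `w_2 = y_1 y_2 x_3 y_4 ⋯ y_r`, obtaining
`G(x_1, x_2, x_3, y_1, …, y_r)`.  Then `y_1^m ∣ G` iff `F(1, w_1, w_2)` lies in the `m`-th power
of the ideal `(w_1, w_2) ⊆ k[w_1, w_2]`.

We index the `x`-variables (only `x_1, x_2, x_3` occur) by `Fin 3 ⊕ Fin r` (`Sum.inl`) and the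
`y`-variables by `Sum.inr`.
-/

open MvPolynomial

section Aux

variable {k : Type*} [CommRing k]

/-- A product of variables is a monomial. -/
lemma aux_prod_X_eq_monomial {σ ι : Type*} (s : Finset ι) (g : ι → σ) :
    (∏ j ∈ s, (X (g j) : MvPolynomial σ k)) =
      monomial (∑ j ∈ s, Finsupp.single (g j) 1) 1 := by
  classical
  induction s using Finset.cons_induction with
  | empty => simp
  | cons a s ha ih =>
      rw [Finset.prod_cons, ih, Finset.sum_cons, X, monomial_mul, one_mul]

/-- Divisibility by a power of a variable in terms of supports. -/
lemma aux_X_pow_dvd_iff {σ : Type*} (v : σ) (m : ℕ) (f : MvPolynomial σ k) :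
    (X v : MvPolynomial σ k) ^ m ∣ f ↔ ∀ μ ∈ f.support, m ≤ μ v := by
  classical
  rw [X_pow_eq_monomial, ← Ideal.mem_span_singleton,
    show ({(monomial (Finsupp.single v m) (1 : k))} : Set (MvPolynomial σ k)) =
      (fun s => monomial s (1 : k)) '' {Finsupp.single v m} by simp,
    mem_ideal_span_monomial_image]
  simp [Finsupp.single_le_iff]

/-- Membership in powers of the irrelevant ideal of `k[X₀, X₁]` in terms of supports. -/
lemma aux_mem_pow_span_iff (m : ℕ) (f : MvPolynomial (Fin 2) k) :
    f ∈ (Ideal.span ({X 0, X 1} : Set (MvPolynomial (Fin 2) k))) ^ m ↔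
      ∀ μ ∈ f.support, m ≤ μ 0 + μ 1 := by
  classical
  constructor
  · induction m generalizing f with
    | zero => intro _ μ _; exact Nat.zero_le _
    | succ n ih =>
        intro hf
        rw [pow_succ] at hf
        refine Submodule.mul_induction_on hf ?_ ?_
        · intro p hp q hq μ hμ
          have hsub := MvPolynomial.support_mul p q hμ
          rw [Finset.mem_add] at hsub
          obtain ⟨a, ha, b, hb, hab⟩ := hsub
          have h1 : n ≤ a 0 + a 1 := ih p hp a ha
          have h2 : 1 ≤ b 0 + b 1 := by
            have : {(X 0 : MvPolynomial (Fin 2) k), X 1} =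
                X '' ({0, 1} : Set (Fin 2)) := by
              simp [Set.image_insert_eq]
            rw [this] at hq
            obtain ⟨i, -, hi⟩ := (mem_ideal_span_X_image.1 hq) b hb
            have : b 0 ≠ 0 ∨ b 1 ≠ 0 := by
              fin_cases i
              exacts [Or.inl hi, Or.inr hi]
            omega
          subst hab
          simp only [Finsupp.add_apply]
          omega
        · intro p q hp hq μ hμ
          have := Finsupp.support_add hμ
          rw [Finset.mem_union] at this
          rcases this with h | h
          · exact hp μ h
          · exact hq μ h
  · intro h
    have hf : f = ∑ ν ∈ f.support, monomial ν (coeff ν f) := (as_sum f)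
    rw [hf]
    refine Ideal.sum_mem _ fun ν hν => ?_
    rw [monomial_eq]
    have hprod : ν.prod (fun i e => (X i : MvPolynomial (Fin 2) k) ^ e) =
        X 0 ^ ν 0 * X 1 ^ ν 1 := by
      rw [Finsupp.prod_fintype _ _ (fun i => pow_zero _), Fin.prod_univ_two]
    rw [hprod]
    have h1 : (X 0 : MvPolynomial (Fin 2) k) ^ ν 0 * X 1 ^ ν 1 ∈
        (Ideal.span ({X 0, X 1} : Set (MvPolynomial (Fin 2) k))) ^ (ν 0 + ν 1) := by
      rw [pow_add]
      exact Ideal.mul_mem_mul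
        (Ideal.pow_mem_pow (Ideal.subset_span (by simp)) _)
        (Ideal.pow_mem_pow (Ideal.subset_span (by simp)) _)
    exact Ideal.mul_mem_left _ _ (Ideal.pow_le_pow_right (h ν hν) h1)

/-- Support condition for a sum of monomials with injectively re-indexed exponents. -/
lemma aux_support_reindex {σ : Type*} (F : MvPolynomial (Fin 3) k)
    (T : (Fin 3 →₀ ℕ) → (σ →₀ ℕ))
    (hT : ∀ ν ∈ F.support, ∀ μ ∈ F.support, T ν = T μ → ν = μ)
    (P : (σ →₀ ℕ) → Prop) :
    (∀ μ ∈ (∑ ν ∈ F.support, (monomial (T ν)) (coeff ν F)).support, P μ) ↔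
      ∀ ν ∈ F.support, P (T ν) := by
  classical
  constructor
  · intro h ν hν
    apply h
    rw [mem_support_iff]
    have hc : coeff (T ν) (∑ ν' ∈ F.support, (monomial (T ν')) (coeff ν' F)) =
        coeff ν F := by
      rw [coeff_sum, Finset.sum_eq_single ν]
      · simp [coeff_monomial]
      · intro b hb hbne
        rw [coeff_monomial, if_neg]
        intro he
        exact hbne (hT b hb ν hν he)
      · intro h'
        exact absurd hν h'
    rw [hc]
    exact mem_support_iff.mp hν
  · intro h μ hμ
    rw [mem_support_iff, coeff_sum] at hμ
    obtain ⟨ν, hν, hne⟩ := Finset.exists_ne_zero_of_sum_ne_zero hμ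
    rw [coeff_monomial] at hne
    by_cases he : T ν = μ
    · exact he ▸ h ν hν
    · rw [if_neg he] at hne
      exact absurd rfl hne

end Aux

theorem divisibility_iff_vanishing_order
    {k : Type*} [Field k] (r : ℕ) (hr : 3 ≤ r) (d m : ℕ) (hdm : m ≤ d)
    (F : MvPolynomial (Fin 3) k) (hF : F.IsHomogeneous d)
    -- the substitution `w_i = x_{i+1} · ∏_{j ≠ i+1} y_j`
    (w : Fin 3 → MvPolynomial (Fin 3 ⊕ Fin r) k)
    (hw : ∀ i : Fin 3, w i =
      X (Sum.inl i) * ∏ j ∈ Finset.univ.erase (Fin.castLE hr i), X (Sum.inr j))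
    -- `G` is the result of substituting the `w_i` into `F`
    (G : MvPolynomial (Fin 3 ⊕ Fin r) k) (hG : G = aeval w F) :
    (X (Sum.inr (⟨0, by omega⟩ : Fin r)) : MvPolynomial (Fin 3 ⊕ Fin r) k) ^ m ∣ G ↔
      aeval (![1, X 0, X 1] : Fin 3 → MvPolynomial (Fin 2) k) F ∈
        (Ideal.span ({X 0, X 1} : Set (MvPolynomial (Fin 2) k))) ^ m := by
  classical
  set y0 : Fin r := ⟨0, by omega⟩ with hy0
  -- the exponent vector of `w i`
  set t : Fin 3 → ((Fin 3 ⊕ Fin r) →₀ ℕ) := fun i =>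
    Finsupp.single (Sum.inl i) 1 +
      ∑ j ∈ Finset.univ.erase (Fin.castLE hr i), Finsupp.single (Sum.inr j) 1 with ht
  have hwm : ∀ i, w i = monomial (t i) 1 := by
    intro i
    rw [hw i, aux_prod_X_eq_monomial, X, monomial_mul, one_mul]
  -- exponent reindexing map
  set T : (Fin 3 →₀ ℕ) → ((Fin 3 ⊕ Fin r) →₀ ℕ) := fun ν =>
    ν 0 • t 0 + ν 1 • t 1 + ν 2 • t 2 with hT
  have ht_inl : ∀ i i' : Fin 3, t i (Sum.inl i') = if i = i' then 1 else 0 := by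
    intro i i'
    simp [ht, Finsupp.single_apply, Finset.sum_apply']
  have hT_inl : ∀ ν (i : Fin 3), T ν (Sum.inl i) = ν i := by
    intro ν i
    simp only [hT, Finsupp.add_apply, Finsupp.smul_apply, ht_inl, smul_eq_mul]
    fin_cases i <;> simp
  have hT_inj : ∀ ν μ, T ν = T μ → ν = μ := by
    intro ν μ h
    ext i
    rw [← hT_inl ν i, ← hT_inl μ i, h]
  have ht_y0 : ∀ i : Fin 3, t i (Sum.inr y0) = if i = 0 then 0 else 1 := by
    intro i
    simp only [ht, Finsupp.add_apply, Finsupp.single_apply, Finset.sum_apply']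
    rw [if_neg (by simp), zero_add]
    simp only [Sum.inr.injEq]
    rw [Finset.sum_ite_eq' (Finset.univ.erase (Fin.castLE hr i)) y0 (fun _ => 1)]
    have hiff : y0 ∈ Finset.univ.erase (Fin.castLE hr i) ↔ ¬ i = 0 := by
      rw [Finset.mem_erase]
      simp only [Finset.mem_univ, and_true]
      constructor
      · intro hne h0
        apply hne; subst h0; rfl
      · intro h0 hc
        exact h0 (Fin.ext (by simpa [hy0] using (congrArg Fin.val hc).symm))
    by_cases h0 : i = 0
    · rw [if_neg (by rw [hiff]; simp [h0]), if_pos h0]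
    · rw [if_pos (hiff.mpr h0), if_neg h0]
  have hT_y0 : ∀ ν, T ν (Sum.inr y0) = ν 1 + ν 2 := by
    intro ν
    simp only [hT, Finsupp.add_apply, Finsupp.smul_apply, ht_y0, smul_eq_mul]
    simp [Fin.ext_iff]
  -- `G` as a sum of monomials
  have haevalw : ∀ (ν : Fin 3 →₀ ℕ) (c : k),
      aeval w ((monomial ν) c) = monomial (T ν) c := by
    intro ν c
    rw [aeval_monomial]
    have hp : ν.prod (fun i e => w i ^ e) = w 0 ^ ν 0 * w 1 ^ ν 1 * w 2 ^ ν 2 := by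
      rw [Finsupp.prod_fintype _ _ (fun i => pow_zero _), Fin.prod_univ_three]
    rw [hp, hwm, hwm, hwm]
    rw [monomial_pow, monomial_pow, monomial_pow, one_pow, one_pow, one_pow]
    rw [algebraMap_eq, C_apply, monomial_mul, monomial_mul, monomial_mul]
    simp only [hT, mul_one, zero_add]
  have hGsum : G = ∑ ν ∈ F.support, (monomial (T ν)) (coeff ν F) := by
    rw [hG]
    conv_lhs => rw [as_sum F]
    rw [map_sum]
    exact Finset.sum_congr rfl fun ν _ => haevalw ν (coeff ν F)
  -- the dehomogenization as a sum of monomials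
  set S : (Fin 3 →₀ ℕ) → (Fin 2 →₀ ℕ) := fun ν =>
    Finsupp.single 0 (ν 1) + Finsupp.single 1 (ν 2) with hS
  have haevalS : ∀ (ν : Fin 3 →₀ ℕ) (c : k),
      aeval (![1, X 0, X 1] : Fin 3 → MvPolynomial (Fin 2) k) ((monomial ν) c) =
        monomial (S ν) c := by
    intro ν c
    rw [aeval_monomial]
    have hp : ν.prod (fun i e => (![1, X 0, X 1] : Fin 3 → MvPolynomial (Fin 2) k) i ^ e)
        = 1 ^ ν 0 * X 0 ^ ν 1 * X 1 ^ ν 2 := by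
      rw [Finsupp.prod_fintype _ _ (fun i => pow_zero _), Fin.prod_univ_three]
      simp [Matrix.cons_val_zero, Matrix.cons_val_one]
    rw [hp, one_pow, one_mul, X_pow_eq_monomial, X_pow_eq_monomial]
    rw [algebraMap_eq, C_apply, monomial_mul, monomial_mul]
    simp only [hS, mul_one, zero_add]
  have hHsum : aeval (![1, X 0, X 1] : Fin 3 → MvPolynomial (Fin 2) k) F =
      ∑ ν ∈ F.support, (monomial (S ν)) (coeff ν F) := by
    conv_lhs => rw [as_sum F]
    rw [map_sum]
    exact Finset.sum_congr rfl fun ν _ => haevalS ν (coeff ν F)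
  have hS0 : ∀ ν, S ν 0 = ν 1 := by
    intro ν
    simp [hS, Finsupp.single_apply]
  have hS1 : ∀ ν, S ν 1 = ν 2 := by
    intro ν
    simp [hS, Finsupp.single_apply]
  -- homogeneity: degrees on the support
  have hdeg : ∀ ν ∈ F.support, ν 0 + ν 1 + ν 2 = d := by
    intro ν hν
    have hwd := hF (mem_support_iff.mp hν)
    have hde : Finsupp.degree ν = d := by
      rw [Finsupp.degree_eq_weight_one]; exact hwd
    rw [← hde]
    rw [Finsupp.degree_apply]
    rw [Finset.sum_subset (Finset.subset_univ ν.support)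
      (fun i _ hi => Finsupp.notMem_support_iff.mp hi), Fin.sum_univ_three]
  -- injectivity of `S` on the support
  have hS_inj : ∀ ν ∈ F.support, ∀ μ ∈ F.support, S ν = S μ → ν = μ := by
    intro ν hν μ hμ h
    have h1 : ν 1 = μ 1 := by rw [← hS0 ν, ← hS0 μ, h]
    have h2 : ν 2 = μ 2 := by rw [← hS1 ν, ← hS1 μ, h]
    have h0 : ν 0 = μ 0 := by
      have := hdeg ν hν
      have := hdeg μ hμ
      omega
    ext i
    fin_cases i <;> assumption
  rw [aux_X_pow_dvd_iff, aux_mem_pow_span_iff, hGsum, hHsum,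
    aux_support_reindex F T (fun ν _ μ _ h => hT_inj ν μ h),
    aux_support_reindex F S hS_inj]
  constructor
  · intro h ν hν
    rw [hS0, hS1]
    have := h ν hν
    rwa [hT_y0] at this
  · intro h ν hν
    rw [hT_y0]
    have := h ν hν
    rwa [hS0, hS1] at this
end
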